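/- Let Γ be a finite group, H a finite group with a Γ-action, and A a finite abelian group with an action of H ⋊ Γ, where |Γ| is coprime to both |H| and |A|. Then there is a bijection between (a) isomorphism classes of extensions 1 → A → G → H → 1 of Γ-groups (i.e. G carries a Γ-action making both maps Γ-equivariant and inducing the given H ⋊ Γ-action on A), and (b) H²(H ⋊ Γ, A); the bijection sends the Γ-group extension A → G → H to the group extension A → G ⋊ Γ → H ⋊ Γ. -/

import Mathlib

universe u

namespace Stmt8

/-- An extension of `Γ`-groups `1 → A → G → H → 1` inducing the given `H ⋊ Γ`-action `ρ`
on `A`. -/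
structure GammaExtension (Γ : Type u) [Group Γ] (H : Type u) [Group H]
    (φ : Γ →* MulAut H) (A : Type u) [CommGroup A]
    (ρ : (H ⋊[φ] Γ) →* MulAut A) : Type (u + 1) where
  G : Type u
  [grp : Group G]
  act : Γ →* MulAut G
  i : A →* G
  p : G →* H
  i_inj : Function.Injective i
  p_surj : Function.Surjective p
  range_eq_ker : i.range = p.ker
  p_equivariant : ∀ (γ : Γ) (g : G), p (act γ g) = φ γ (p g)
  conj_i : ∀ (g : G) (a : A), g * i a * g⁻¹ = i (ρ (SemidirectProduct.inl (p g)) a)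
  act_i : ∀ (γ : Γ) (a : A), act γ (i a) = i (ρ (SemidirectProduct.inr γ) a)

attribute [instance] GammaExtension.grp

variable {Γ H A : Type u} [Group Γ] [Group H] [CommGroup A]
  {φ : Γ →* MulAut H} {ρ : (H ⋊[φ] Γ) →* MulAut A}

/-- An isomorphism of `Γ`-group extensions of `H` by `A`: a `Γ`-equivariant isomorphism
restricting to the identity on `A` and inducing the identity on `H`. -/
structure ExtIso (E E' : GammaExtension Γ H φ A ρ) : Type u where
  e : E.G ≃* E'.G
  equivariant : ∀ (γ : Γ) (g : E.G), e (E.act γ g) = E'.act γ (e g)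
  comm_i : ∀ a : A, e (E.i a) = E'.i a
  comm_p : ∀ g : E.G, E'.p (e g) = E.p g

/-- 2-cocycles on `H ⋊ Γ` with values in `A` (action `ρ`). -/
def IsTwoCocycle (ρ : (H ⋊[φ] Γ) →* MulAut A)
    (σ : (H ⋊[φ] Γ) → (H ⋊[φ] Γ) → A) : Prop :=
  ∀ x y z, ρ x (σ y z) * σ x (y * z) = σ (x * y) z * σ x y

/-- 2-coboundaries on `H ⋊ Γ` with values in `A` (action `ρ`). -/
def IsTwoCoboundary (ρ : (H ⋊[φ] Γ) →* MulAut A)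
    (σ : (H ⋊[φ] Γ) → (H ⋊[φ] Γ) → A) : Prop :=
  ∃ t : (H ⋊[φ] Γ) → A, ∀ x y, σ x y = t x * ρ x (t y) * (t (x * y))⁻¹

/-- The induced surjection `G ⋊ Γ → H ⋊ Γ` of a `Γ`-extension. -/
def qmap (E : GammaExtension Γ H φ A ρ) : (E.G ⋊[E.act] Γ) →* (H ⋊[φ] Γ) :=
  SemidirectProduct.map E.p (MonoidHom.id Γ) (by
    intro γ
    ext g
    exact E.p_equivariant γ g)

/-- `E` realizes the 2-cocycle `σ` if `σ` arises from a set-theoretic section of the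
extension `A → G ⋊ Γ → H ⋊ Γ`. -/
def Realizes (E : GammaExtension Γ H φ A ρ)
    (σ : (H ⋊[φ] Γ) → (H ⋊[φ] Γ) → A) : Prop :=
  ∃ s : (H ⋊[φ] Γ) → (E.G ⋊[E.act] Γ),
    (∀ x, qmap E (s x) = x) ∧
    ∀ x y, s x * s y = SemidirectProduct.inl (E.i (σ x y)) * s (x * y)

end Stmt8

namespace Stmt8
open SemidirectProduct

variable {Γ H A : Type u} [Group Γ] [Group H] [CommGroup A]
  {φ : Γ →* MulAut H} {ρ : (H ⋊[φ] Γ) →* MulAut A}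

lemma qmap_apply (E : GammaExtension Γ H φ A ρ) (w : E.G ⋊[E.act] Γ) :
    qmap E w = ⟨E.p w.left, w.right⟩ := rfl

lemma qmap_surjective (E : GammaExtension Γ H φ A ρ) : Function.Surjective (qmap E) := by
  intro x
  obtain ⟨g, hg⟩ := E.p_surj x.left
  exact ⟨⟨g, x.right⟩, by rw [qmap_apply, hg]⟩

lemma p_i (E : GammaExtension Γ H φ A ρ) (a : A) : E.p (E.i a) = 1 := by
  have : E.i a ∈ E.i.range := ⟨a, rfl⟩
  rw [E.range_eq_ker] at this
  exact this

lemma qmap_inl_i (E : GammaExtension Γ H φ A ρ) (a : A) :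
    qmap E (inl (E.i a)) = 1 := by
  rw [qmap_apply]
  ext <;> simp [p_i]

lemma qmap_inr (E : GammaExtension Γ H φ A ρ) (γ : Γ) :
    qmap E (inr γ : E.G ⋊[E.act] Γ) = inr γ := by
  rw [qmap_apply]; ext <;> simp

lemma exists_of_ker (E : GammaExtension Γ H φ A ρ) {w : E.G ⋊[E.act] Γ}
    (h : qmap E w = 1) : ∃ a, w = inl (E.i a) := by
  rw [qmap_apply] at h
  have h1 : E.p w.left = 1 := congrArg SemidirectProduct.left h
  have h2 : w.right = 1 := congrArg SemidirectProduct.right h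
  have : w.left ∈ E.p.ker := h1
  rw [← E.range_eq_ker] at this
  obtain ⟨a, ha⟩ := this
  exact ⟨a, by ext <;> simp [← ha, h2]⟩

lemma inl_i_inj (E : GammaExtension Γ H φ A ρ) {a b : A}
    (h : (inl (E.i a) : E.G ⋊[E.act] Γ) = inl (E.i b)) : a = b :=
  E.i_inj (inl_injective h)

lemma conj_formula (E : GammaExtension Γ H φ A ρ) (w : E.G ⋊[E.act] Γ) (a : A) :
    w * inl (E.i a) = inl (E.i (ρ (qmap E w) a)) * w := by
  have hinr : ∀ (γ : Γ) (b : A), (inr γ : E.G ⋊[E.act] Γ) * inl (E.i b)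
      = inl (E.i (ρ (inr γ) b)) * inr γ := by
    intro γ b
    rw [← E.act_i, inl_aut]
    simp [mul_assoc]
  have hinl : ∀ (g : E.G) (b : A), (inl g : E.G ⋊[E.act] Γ) * inl (E.i b)
      = inl (E.i (ρ (inl (E.p g)) b)) * inl g := by
    intro g b
    rw [← map_mul, ← map_mul, ← E.conj_i]
    group
  calc w * inl (E.i a) = inl w.left * inr w.right * inl (E.i a) := by
        rw [inl_left_mul_inr_right]
    _ = inl w.left * (inl (E.i (ρ (inr w.right) a)) * inr w.right) := by
        rw [mul_assoc, hinr]
    _ = inl (E.i (ρ (inl (E.p w.left)) (ρ (inr w.right) a))) * (inl w.left * inr w.right) := by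
        rw [← mul_assoc, hinl, mul_assoc]
    _ = inl (E.i (ρ (qmap E w) a)) * w := by
        rw [inl_left_mul_inr_right]
        have : (inl (E.p w.left) * inr w.right : H ⋊[φ] Γ) = qmap E w := by
          rw [qmap_apply, mk_eq_inl_mul_inr]
        rw [← this, map_mul]
        rfl

lemma part1 (E : GammaExtension Γ H φ A ρ) :
    ∃ σ : (H ⋊[φ] Γ) → (H ⋊[φ] Γ) → A, IsTwoCocycle ρ σ ∧ Realizes E σ := by
  classical
  let s : (H ⋊[φ] Γ) → (E.G ⋊[E.act] Γ) := Function.surjInv (qmap_surjective E)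
  have hs : ∀ x, qmap E (s x) = x := Function.surjInv_eq (qmap_surjective E)
  have hker : ∀ x y, qmap E (s x * s y * (s (x * y))⁻¹) = 1 := by
    intro x y; simp [map_mul, hs]
  let σ : (H ⋊[φ] Γ) → (H ⋊[φ] Γ) → A := fun x y =>
    Classical.choose (exists_of_ker E (hker x y))
  have hσ : ∀ x y, s x * s y = inl (E.i (σ x y)) * s (x * y) := by
    intro x y
    have := Classical.choose_spec (exists_of_ker E (hker x y))
    rw [← this]
    group
  refine ⟨σ, ?_, ⟨s, hs, hσ⟩⟩
  intro x y z
  have key : (inl (E.i (ρ x (σ y z) * σ x (y * z))) : E.G ⋊[E.act] Γ) * s (x * y * z)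
      = inl (E.i (σ (x * y) z * σ x y)) * s (x * y * z) := by
    have l1 : s x * (s y * s z) = inl (E.i (ρ x (σ y z) * σ x (y * z))) * s (x * (y * z)) := by
      rw [hσ y z, ← mul_assoc, conj_formula E (s x), hs, mul_assoc, hσ x (y * z),
        ← mul_assoc, ← map_mul, ← map_mul]
    have l2 : s x * s y * s z = inl (E.i (σ (x * y) z * σ x y)) * s (x * y * z) := by
      rw [hσ x y, mul_assoc, hσ (x * y) z, ← mul_assoc, ← map_mul, ← map_mul, mul_comm (σ x y)]
    rw [← mul_assoc, ← mul_assoc x y z] at l1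
    exact l1.symm.trans l2
  exact inl_i_inj E (mul_right_cancel key)

lemma part2_forward (E E' : GammaExtension Γ H φ A ρ)
    (σ σ' : (H ⋊[φ] Γ) → (H ⋊[φ] Γ) → A)
    {s : (H ⋊[φ] Γ) → (E.G ⋊[E.act] Γ)} (hs : ∀ x, qmap E (s x) = x)
    (hσ : ∀ x y, s x * s y = inl (E.i (σ x y)) * s (x * y))
    {s' : (H ⋊[φ] Γ) → (E'.G ⋊[E'.act] Γ)} (hs' : ∀ x, qmap E' (s' x) = x)
    (hσ' : ∀ x y, s' x * s' y = inl (E'.i (σ' x y)) * s' (x * y))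
    (iso : ExtIso E E') :
    IsTwoCoboundary ρ fun x y => σ x y * (σ' x y)⁻¹ := by
  classical
  let ehat : (E.G ⋊[E.act] Γ) →* (E'.G ⋊[E'.act] Γ) :=
    SemidirectProduct.map iso.e.toMonoidHom (MonoidHom.id Γ) (by
      intro γ; ext g; exact iso.equivariant γ g)
  have hq : ∀ w, qmap E' (ehat w) = qmap E w := by
    intro w
    rw [qmap_apply, qmap_apply]
    congr 1
    exact iso.comm_p w.left
  have hehatinl : ∀ a : A, ehat (inl (E.i a)) = inl (E'.i a) := by
    intro a
    show SemidirectProduct.map _ _ _ _ = _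
    rw [map_inl]
    exact congrArg inl (iso.comm_i a)
  have hker : ∀ x, qmap E' (ehat (s x) * (s' x)⁻¹) = 1 := by
    intro x; simp [map_mul, hq, hs, hs']
  let t : (H ⋊[φ] Γ) → A := fun x => Classical.choose (exists_of_ker E' (hker x))
  have ht : ∀ x, ehat (s x) = inl (E'.i (t x)) * s' x := by
    intro x
    have := Classical.choose_spec (exists_of_ker E' (hker x))
    rw [← this]; group
  refine ⟨t, fun x y => ?_⟩
  have e1 : ehat (s x) * ehat (s y) = inl (E'.i (t x * ρ x (t y) * σ' x y)) * s' (x * y) := by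
    calc ehat (s x) * ehat (s y)
        = (inl (E'.i (t x)) * s' x) * (inl (E'.i (t y)) * s' y) := by rw [ht, ht]
      _ = inl (E'.i (t x)) * ((s' x * inl (E'.i (t y))) * s' y) := by
          simp only [mul_assoc]
      _ = inl (E'.i (t x)) * ((inl (E'.i (ρ x (t y))) * s' x) * s' y) := by
          rw [conj_formula, hs']
      _ = inl (E'.i (t x)) * inl (E'.i (ρ x (t y))) * (s' x * s' y) := by
          simp only [mul_assoc]
      _ = inl (E'.i (t x)) * inl (E'.i (ρ x (t y))) * (inl (E'.i (σ' x y)) * s' (x * y)) := by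
          rw [hσ']
      _ = inl (E'.i (t x)) * inl (E'.i (ρ x (t y))) * inl (E'.i (σ' x y)) * s' (x * y) := by
          simp only [mul_assoc]
      _ = inl (E'.i (t x * ρ x (t y) * σ' x y)) * s' (x * y) := by
          simp only [map_mul]
  have e2 : ehat (s x) * ehat (s y) = inl (E'.i (σ x y * t (x * y))) * s' (x * y) := by
    calc ehat (s x) * ehat (s y) = ehat (s x * s y) := (map_mul ehat _ _).symm
      _ = inl (E'.i (σ x y)) * (inl (E'.i (t (x * y))) * s' (x * y)) := by
          rw [hσ, map_mul, hehatinl, ht]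
      _ = inl (E'.i (σ x y * t (x * y))) * s' (x * y) := by
          simp only [map_mul, mul_assoc]
  have heq : t x * ρ x (t y) * σ' x y = σ x y * t (x * y) :=
    inl_i_inj E' (mul_right_cancel (e1.symm.trans e2))
  have h3 : σ x y = t x * ρ x (t y) * σ' x y * (t (x * y))⁻¹ :=
    eq_mul_inv_of_mul_eq heq.symm
  show σ x y * (σ' x y)⁻¹ = t x * ρ x (t y) * (t (x * y))⁻¹
  rw [h3, mul_assoc (t x * ρ x (t y)), mul_comm (σ' x y), ← mul_assoc,
    mul_assoc _ (σ' x y), mul_inv_cancel, mul_one]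

lemma s_one (E : GammaExtension Γ H φ A ρ)
    {σ : (H ⋊[φ] Γ) → (H ⋊[φ] Γ) → A}
    {s : (H ⋊[φ] Γ) → (E.G ⋊[E.act] Γ)}
    (hσ : ∀ x y, s x * s y = inl (E.i (σ x y)) * s (x * y)) :
    s 1 = inl (E.i (σ 1 1)) := by
  have h := hσ 1 1
  rw [one_mul] at h
  exact mul_right_cancel h

lemma part2_backward [Finite Γ] [Finite A]
    (h2 : Nat.Coprime (Nat.card Γ) (Nat.card A))
    (E E' : GammaExtension Γ H φ A ρ)
    (σ : (H ⋊[φ] Γ) → (H ⋊[φ] Γ) → A)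
    {s : (H ⋊[φ] Γ) → (E.G ⋊[E.act] Γ)} (hs : ∀ x, qmap E (s x) = x)
    (hσ : ∀ x y, s x * s y = inl (E.i (σ x y)) * s (x * y))
    {s' : (H ⋊[φ] Γ) → (E'.G ⋊[E'.act] Γ)} (hs' : ∀ x, qmap E' (s' x) = x)
    (hσ' : ∀ x y, s' x * s' y = inl (E'.i (σ x y)) * s' (x * y)) :
    Nonempty (ExtIso E E') := by
  classical
  -- the "alpha coordinate" of an element of E.G ⋊ Γ
  have hker : ∀ w : E.G ⋊[E.act] Γ, qmap E (w * (s (qmap E w))⁻¹) = 1 := by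
    intro w; simp [map_mul, hs]
  let α : (E.G ⋊[E.act] Γ) → A := fun w => Classical.choose (exists_of_ker E (hker w))
  have hα : ∀ w, w = inl (E.i (α w)) * s (qmap E w) := by
    intro w
    have := Classical.choose_spec (exists_of_ker E (hker w))
    rw [← this]; group
  have αs : ∀ (a : A) (x : H ⋊[φ] Γ), α (inl (E.i a) * s x) = a := by
    intro a x
    have hq : qmap E (inl (E.i a) * s x) = x := by simp [map_mul, qmap_inl_i, hs]
    have h1 := hα (inl (E.i a) * s x)
    rw [hq] at h1
    exact (inl_i_inj E (mul_right_cancel h1.symm)).symm ▸ rfl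
  -- the homomorphism F0
  let F0fun : (E.G ⋊[E.act] Γ) → (E'.G ⋊[E'.act] Γ) :=
    fun w => inl (E'.i (α w)) * s' (qmap E w)
  have hF0mul : ∀ w v, F0fun (w * v) = F0fun w * F0fun v := by
    intro w v
    have hql : qmap E (w * v) = qmap E w * qmap E v := map_mul _ _ _
    have hwv : w * v = inl (E.i (α w * ρ (qmap E w) (α v) * σ (qmap E w) (qmap E v)))
        * s (qmap E w * qmap E v) := by
      calc w * v = (inl (E.i (α w)) * s (qmap E w)) * (inl (E.i (α v)) * s (qmap E v)) := by
            rw [← hα, ← hα]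
        _ = inl (E.i (α w)) * ((s (qmap E w) * inl (E.i (α v))) * s (qmap E v)) := by
            simp only [mul_assoc]
        _ = inl (E.i (α w)) * ((inl (E.i (ρ (qmap E w) (α v))) * s (qmap E w)) * s (qmap E v)) := by
            rw [conj_formula, hs]
        _ = inl (E.i (α w)) * inl (E.i (ρ (qmap E w) (α v))) * (s (qmap E w) * s (qmap E v)) := by
            simp only [mul_assoc]
        _ = inl (E.i (α w)) * inl (E.i (ρ (qmap E w) (α v)))
              * (inl (E.i (σ (qmap E w) (qmap E v))) * s (qmap E w * qmap E v)) := by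
            rw [hσ]
        _ = _ := by simp only [map_mul, mul_assoc]
    have hαwv : α (w * v) = α w * ρ (qmap E w) (α v) * σ (qmap E w) (qmap E v) := by
      rw [hwv]; exact αs _ _
    show inl (E'.i (α (w * v))) * s' (qmap E (w * v)) = _
    rw [hαwv, hql]
    calc inl (E'.i (α w * ρ (qmap E w) (α v) * σ (qmap E w) (qmap E v)))
          * s' (qmap E w * qmap E v)
        = inl (E'.i (α w)) * inl (E'.i (ρ (qmap E w) (α v)))
            * (inl (E'.i (σ (qmap E w) (qmap E v))) * s' (qmap E w * qmap E v)) := by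
          simp only [map_mul, mul_assoc]
      _ = inl (E'.i (α w)) * inl (E'.i (ρ (qmap E w) (α v)))
            * (s' (qmap E w) * s' (qmap E v)) := by rw [hσ']
      _ = inl (E'.i (α w)) * ((inl (E'.i (ρ (qmap E w) (α v))) * s' (qmap E w)) * s' (qmap E v)) := by
          simp only [mul_assoc]
      _ = inl (E'.i (α w)) * ((s' (qmap E w) * inl (E'.i (α v))) * s' (qmap E v)) := by
          rw [conj_formula, hs']
      _ = (inl (E'.i (α w)) * s' (qmap E w)) * (inl (E'.i (α v)) * s' (qmap E v)) := by
          simp only [mul_assoc]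
      _ = F0fun w * F0fun v := rfl
  have hα1 : α 1 = (σ 1 1)⁻¹ := by
    have h1 : (1 : E.G ⋊[E.act] Γ) = inl (E.i ((σ 1 1)⁻¹)) * s 1 := by
      rw [s_one E hσ, ← map_mul, ← map_mul, inv_mul_cancel, map_one, map_one]
    have h2 := hα 1
    rw [map_one] at h2
    have := h1.symm.trans h2
    exact (inl_i_inj E (mul_right_cancel this)).symm
  have hF0one : F0fun 1 = 1 := by
    show inl (E'.i (α 1)) * s' (qmap E 1) = 1
    rw [hα1, map_one, s_one E' hσ', ← map_mul, ← map_mul, inv_mul_cancel, map_one, map_one]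
  let F0 : (E.G ⋊[E.act] Γ) →* (E'.G ⋊[E'.act] Γ) :=
    { toFun := F0fun, map_one' := hF0one, map_mul' := hF0mul }
  have hqF : ∀ w, qmap E' (F0 w) = qmap E w := by
    intro w
    show qmap E' (inl (E'.i (α w)) * s' (qmap E w)) = qmap E w
    simp [map_mul, qmap_inl_i, hs']
  have hFinl : ∀ a : A, F0 (inl (E.i a)) = inl (E'.i a) := by
    intro a
    have h1 : (inl (E.i a) : E.G ⋊[E.act] Γ) = inl (E.i (a * (σ 1 1)⁻¹)) * s 1 := by
      rw [s_one E hσ, ← map_mul, ← map_mul]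
      group
    show inl (E'.i (α (inl (E.i a)))) * s' (qmap E (inl (E.i a))) = _
    rw [qmap_inl_i, h1, αs, s_one E' hσ', ← map_mul, ← map_mul]
    group
  have hF0inj : Function.Injective F0 := by
    intro w v h
    have hq : qmap E w = qmap E v := by rw [← hqF, ← hqF, h]
    have h1 : inl (E'.i (α w)) * s' (qmap E w) = inl (E'.i (α v)) * s' (qmap E w) := by
      have : F0fun w = F0fun v := h
      rw [show F0fun w = inl (E'.i (α w)) * s' (qmap E w) from rfl,
        show F0fun v = inl (E'.i (α v)) * s' (qmap E v) from rfl, ← hq] at this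
      exact this
    have hαeq : α w = α v := inl_i_inj E' (mul_right_cancel h1)
    rw [hα w, hα v, hαeq, hq]
  have hF0surj : Function.Surjective F0 := by
    intro v
    have hkv : qmap E' (v * (s' (qmap E' v))⁻¹) = 1 := by simp [map_mul, hs']
    obtain ⟨a, ha⟩ := exists_of_ker E' hkv
    refine ⟨inl (E.i a) * s (qmap E' v), ?_⟩
    have hq : qmap E (inl (E.i a) * s (qmap E' v)) = qmap E' v := by
      simp [map_mul, qmap_inl_i, hs]
    show inl (E'.i (α (inl (E.i a) * s (qmap E' v)))) * s' (qmap E (inl (E.i a) * s (qmap E' v))) = v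
    rw [hq, αs, ← ha]
    group
  -- the defect 1-cocycle b : Γ → A
  have hkb : ∀ γ : Γ, qmap E' (F0 (inr γ) * (inr γ)⁻¹) = 1 := by
    intro γ
    simp [map_mul, hqF, qmap_inr]
  let b : Γ → A := fun γ => Classical.choose (exists_of_ker E' (hkb γ))
  have hb : ∀ γ, F0 (inr γ) = inl (E'.i (b γ)) * inr γ := by
    intro γ
    have := Classical.choose_spec (exists_of_ker E' (hkb γ))
    rw [← this]; group
  have hbc : ∀ γ δ : Γ, b (γ * δ) = b γ * ρ (inr γ) (b δ) := by
    intro γ δ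
    have hq : qmap E' (inr γ : E'.G ⋊[E'.act] Γ) = inr γ := qmap_inr E' γ
    have h1 : F0 (inr (γ * δ)) = inl (E'.i (b γ * ρ (inr γ) (b δ))) * inr (γ * δ) := by
      calc F0 (inr (γ * δ)) = F0 (inr γ) * F0 (inr δ) := by rw [← map_mul, ← map_mul]
        _ = inl (E'.i (b γ)) * ((inr γ * inl (E'.i (b δ))) * inr δ) := by
            rw [hb, hb]; simp only [mul_assoc]
        _ = inl (E'.i (b γ)) * ((inl (E'.i (ρ (inr γ) (b δ))) * inr γ) * inr δ) := by
            rw [conj_formula, hq]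
        _ = inl (E'.i (b γ * ρ (inr γ) (b δ))) * inr (γ * δ) := by
            simp only [map_mul, mul_assoc]
    have h2 := hb (γ * δ)
    have := h1.symm.trans h2
    have h3 : (inl (E'.i (b γ * ρ (inr γ) (b δ))) : E'.G ⋊[E'.act] Γ)
        = inl (E'.i (b (γ * δ))) := mul_right_cancel this
    exact (inl_i_inj E' h3).symm
  -- averaging: find d with b γ = d⁻¹ * ρ (inr γ) d
  obtain ⟨d, hd⟩ : ∃ d : A, ∀ γ : Γ, b γ = d⁻¹ * ρ (inr γ) d := by
    haveI := Fintype.ofFinite Γ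
    set n := Nat.card Γ with hn
    let c : A := ∏ γ : Γ, b γ
    have key : ∀ δ : Γ, (b δ) ^ n = c * (ρ (inr δ) c)⁻¹ := by
      intro δ
      have h1 : ρ (inr δ) c = ∏ γ : Γ, ρ (inr δ) (b γ) := map_prod (ρ (inr δ)) _ _
      have h2 : ∀ γ : Γ, ρ (inr δ) (b γ) = (b δ)⁻¹ * b (δ * γ) := by
        intro γ
        rw [hbc δ γ]; group
      have h3 : ∏ γ : Γ, b (δ * γ) = c := by
        exact Equiv.prod_comp (Equiv.mulLeft δ) b
      have h4 : ρ (inr δ) c = ((b δ)⁻¹) ^ (Fintype.card Γ) * c := by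
        rw [h1]
        simp only [h2]
        rw [Finset.prod_mul_distrib, Finset.prod_const, h3, Finset.card_univ]
      rw [h4, hn, Nat.card_eq_fintype_card]
      group
    let m : ℤ := (Nat.card A).gcdB n
    have hroot : ∀ a : A, (a ^ n) ^ m = a := fun a => (powCoprime h2.symm).left_inv a
    refine ⟨(c ^ m)⁻¹, fun γ => ?_⟩
    have : b γ = ((b γ) ^ n) ^ m := (hroot (b γ)).symm
    rw [this, key γ, mul_zpow, inv_zpow, inv_inv, map_inv, map_zpow]
  -- the corrected isomorphism F2
  let u : E'.G ⋊[E'.act] Γ := inl (E'.i d)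
  let F2 : (E.G ⋊[E.act] Γ) → (E'.G ⋊[E'.act] Γ) := fun w => u * F0 w * u⁻¹
  have hF2mul : ∀ w v, F2 (w * v) = F2 w * F2 v := by
    intro w v
    show u * F0 (w * v) * u⁻¹ = (u * F0 w * u⁻¹) * (u * F0 v * u⁻¹)
    rw [map_mul]; group
  have hF2inl : ∀ a : A, F2 (inl (E.i a)) = inl (E'.i a) := by
    intro a
    show u * F0 (inl (E.i a)) * u⁻¹ = inl (E'.i a)
    rw [hFinl]
    show inl (E'.i d) * inl (E'.i a) * (inl (E'.i d))⁻¹ = inl (E'.i a)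
    rw [← map_inv, ← map_inv, ← map_mul, ← map_mul, ← map_mul, ← map_mul]
    congr 1
    rw [mul_comm d a, mul_inv_cancel_right]
  have hqF2 : ∀ w, qmap E' (F2 w) = qmap E w := by
    intro w
    show qmap E' (u * F0 w * u⁻¹) = qmap E w
    have hu : qmap E' u = 1 := qmap_inl_i E' d
    simp [map_mul, hu, hqF]
  have hF2inj : Function.Injective F2 := by
    intro w v h
    have : F0 w = F0 v := by
      have h1 : u * F0 w * u⁻¹ = u * F0 v * u⁻¹ := h
      have h2 := congrArg (fun z => u⁻¹ * z * u) h1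
      simpa [mul_assoc] using h2
    exact hF0inj this
  have hF2surj : Function.Surjective F2 := by
    intro v
    obtain ⟨w, hw⟩ := hF0surj (u⁻¹ * v * u)
    exact ⟨w, by show u * F0 w * u⁻¹ = v; rw [hw]; group⟩
  have hF2inr : ∀ γ : Γ, F2 (inr γ) = inr γ := by
    intro γ
    show u * F0 (inr γ) * u⁻¹ = inr γ
    rw [hb γ]
    have hq : qmap E' (inr γ : E'.G ⋊[E'.act] Γ) = inr γ := qmap_inr E' γ
    have hconj : (inr γ : E'.G ⋊[E'.act] Γ) * inl (E'.i d⁻¹) = inl (E'.i (ρ (inr γ) d⁻¹)) * inr γ := by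
      rw [conj_formula, hq]
    calc u * (inl (E'.i (b γ)) * inr γ) * u⁻¹
        = u * inl (E'.i (b γ)) * (inr γ * inl (E'.i d⁻¹)) := by
          show _ = _ * _ * (_ * inl (E'.i d⁻¹))
          rw [map_inv, map_inv]
          group
          rfl
      _ = u * inl (E'.i (b γ)) * (inl (E'.i (ρ (inr γ) d⁻¹)) * inr γ) := by rw [hconj]
      _ = inl (E'.i (d * b γ * ρ (inr γ) d⁻¹)) * inr γ := by
          show inl (E'.i d) * _ * _ = _
          simp only [map_mul, mul_assoc]
      _ = inr γ := by
          have : d * b γ * ρ (inr γ) d⁻¹ = 1 := by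
            rw [hd γ, map_inv]; group
          rw [this, map_one, map_one, one_mul]
  have hright : ∀ w : E.G ⋊[E.act] Γ, (F2 w).right = w.right := by
    intro w
    have h1 := congrArg SemidirectProduct.right (hqF2 w)
    rw [qmap_apply, qmap_apply] at h1
    exact h1
  -- restrict to an iso e0 : E.G ≃* E'.G
  have hF2left : ∀ g : E.G, F2 (inl g) = inl ((F2 (inl g)).left) := by
    intro g
    have hr : (F2 (inl g)).right = 1 := by rw [hright]; simp
    ext
    · simp
    · rw [hr]; simp
  have he0mul : ∀ g h : E.G, (F2 (inl (g * h))).left = (F2 (inl g)).left * (F2 (inl h)).left := by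
    intro g h
    have : F2 (inl (g * h)) = inl ((F2 (inl g)).left * (F2 (inl h)).left) := by
      rw [map_mul, hF2mul, hF2left g, hF2left h, ← map_mul]
      simp
    rw [this]; simp
  have he0one : (F2 (inl (1 : E.G))).left = 1 := by
    have h1 : F2 (inl (1 : E.G)) = 1 := by
      rw [map_one]
      show u * F0 1 * u⁻¹ = 1
      rw [map_one]; group
    rw [h1]; simp
  let e0 : E.G →* E'.G :=
    { toFun := fun g => (F2 (inl g)).left, map_one' := he0one, map_mul' := he0mul }
  have he0inj : Function.Injective e0 := by
    intro g h hgh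
    have : F2 (inl g) = F2 (inl h) := by
      rw [hF2left g, hF2left h]
      exact congrArg inl hgh
    exact inl_injective (hF2inj this)
  have he0surj : Function.Surjective e0 := by
    intro g'
    obtain ⟨w, hw⟩ := hF2surj (inl g')
    have hwr : w.right = 1 := by
      have := hright w
      rw [hw] at this
      simpa using this.symm
    have hwinl : w = inl w.left := by
      ext
      · simp
      · rw [hwr]; simp
    refine ⟨w.left, ?_⟩
    show (F2 (inl w.left)).left = g'
    rw [← hwinl, hw]; simp
  let e : E.G ≃* E'.G := MulEquiv.ofBijective e0 ⟨he0inj, he0surj⟩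
  have heval : ∀ g : E.G, F2 (inl g) = inl (e g) := fun g => hF2left g
  refine ⟨⟨e, ?_, ?_, ?_⟩⟩
  · intro γ g
    have h1 : (inl (E.act γ g) : E.G ⋊[E.act] Γ) = inr γ * inl g * inr γ⁻¹ := inl_aut γ g
    have h2 : F2 (inl (E.act γ g)) = inl (E'.act γ (e g)) := by
      have hm : F2 (inr γ * inl g * inr γ⁻¹) = inr γ * inl (e g) * inr γ⁻¹ := by
        rw [hF2mul, hF2mul, hF2inr, heval, hF2inr γ⁻¹]
      rw [h1, hm, ← inl_aut]
    have h3 := heval (E.act γ g)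
    exact inl_injective (h3.symm.trans h2)
  · intro a
    exact inl_injective ((heval (E.i a)).symm.trans (hF2inl a))
  · intro g
    have h1 : qmap E' (inl (e g)) = qmap E (inl g) := by rw [← heval, hqF2]
    rw [qmap_apply, qmap_apply] at h1
    have := congrArg SemidirectProduct.left h1
    simpa using this

/-- Twisted product: underlying type of the extension built from a 2-cocycle. -/
structure Tw {Γ H A : Type u} [Group Γ] [Group H] [CommGroup A]
    {φ : Γ →* MulAut H} (ρ : (H ⋊[φ] Γ) →* MulAut A)
    (σ : (H ⋊[φ] Γ) → (H ⋊[φ] Γ) → A) : Type u where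
  a : A
  x : H ⋊[φ] Γ

namespace Tw

variable {σ : (H ⋊[φ] Γ) → (H ⋊[φ] Γ) → A}

lemma ext' {w v : Tw ρ σ} (h1 : w.a = v.a) (h2 : w.x = v.x) : w = v := by
  cases w; cases v; cases h1; cases h2; rfl

instance : Mul (Tw ρ σ) := ⟨fun w v => ⟨w.a * ρ w.x v.a * σ w.x v.x, w.x * v.x⟩⟩
instance : One (Tw ρ σ) := ⟨⟨(σ 1 1)⁻¹, 1⟩⟩
instance : Inv (Tw ρ σ) := ⟨fun w => ⟨(σ 1 1)⁻¹ * (σ w.x⁻¹ w.x)⁻¹ * ρ w.x⁻¹ w.a⁻¹, w.x⁻¹⟩⟩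

lemma mul_a (w v : Tw ρ σ) : (w * v).a = w.a * ρ w.x v.a * σ w.x v.x := rfl
lemma mul_x (w v : Tw ρ σ) : (w * v).x = w.x * v.x := rfl
lemma one_a : (1 : Tw ρ σ).a = (σ 1 1)⁻¹ := rfl
lemma one_x : (1 : Tw ρ σ).x = 1 := rfl
lemma inv_a (w : Tw ρ σ) : (w⁻¹).a = (σ 1 1)⁻¹ * (σ w.x⁻¹ w.x)⁻¹ * ρ w.x⁻¹ w.a⁻¹ := rfl
lemma inv_x (w : Tw ρ σ) : (w⁻¹).x = w.x⁻¹ := rfl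

lemma sigma_one_right (hσ : IsTwoCocycle ρ σ) (z : H ⋊[φ] Γ) : σ 1 z = σ 1 1 := by
  have h := hσ 1 1 z
  rw [one_mul, one_mul, map_one] at h
  simp only [MulAut.one_apply] at h
  exact mul_left_cancel h

lemma sigma_one_left (hσ : IsTwoCocycle ρ σ) (x : H ⋊[φ] Γ) : σ x 1 = ρ x (σ 1 1) := by
  have h := hσ x 1 1
  rw [mul_one, mul_one] at h
  exact (mul_right_cancel h).symm

/-- The group structure coming from a 2-cocycle. -/
@[reducible]
def group (hσ : IsTwoCocycle ρ σ) : Group (Tw ρ σ) :=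
  Group.ofLeftAxioms
    (by
      intro w v z
      refine ext' ?_ (mul_assoc _ _ _)
      show (w.a * ρ w.x v.a * σ w.x v.x) * ρ (w.x * v.x) z.a * σ (w.x * v.x) z.x
          = w.a * ρ w.x (v.a * ρ v.x z.a * σ v.x z.x) * σ w.x (v.x * z.x)
      have hc := hσ w.x v.x z.x
      have hmap : ρ (w.x * v.x) z.a = ρ w.x (ρ v.x z.a) := by
        rw [map_mul]; rfl
      rw [hmap, map_mul, map_mul]
      have hc' : σ (w.x * v.x) z.x = ρ w.x (σ v.x z.x) * σ w.x (v.x * z.x) * (σ w.x v.x)⁻¹ := by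
        rw [hc]; group
      rw [hc']
      simp only [mul_assoc]
      congr 2
      rw [mul_comm (σ w.x v.x)]
      simp only [mul_assoc, inv_mul_cancel, mul_one])
    (by
      intro w
      refine ext' ?_ (one_mul _)
      show (σ 1 1)⁻¹ * ρ 1 w.a * σ 1 w.x = w.a
      rw [map_one, sigma_one_right hσ w.x]
      simp only [MulAut.one_apply]
      rw [mul_comm ((σ 1 1)⁻¹) w.a, mul_assoc, inv_mul_cancel, mul_one])
    (by
      intro w
      refine ext' ?_ (inv_mul_cancel _)
      show ((σ 1 1)⁻¹ * (σ w.x⁻¹ w.x)⁻¹ * ρ w.x⁻¹ w.a⁻¹) * ρ w.x⁻¹ w.a * σ w.x⁻¹ w.x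
          = (σ 1 1)⁻¹
      rw [map_inv]
      group)

end Tw

lemma part3 [Finite Γ] [Finite H] [Finite A]
    (h2 : Nat.Coprime (Nat.card Γ) (Nat.card A))
    (σ : (H ⋊[φ] Γ) → (H ⋊[φ] Γ) → A) (hσ : IsTwoCocycle ρ σ) :
    ∃ E : GammaExtension Γ H φ A ρ, Realizes E σ := by
  classical
  letI : Group (Tw ρ σ) := Tw.group hσ
  haveI finX : Finite (H ⋊[φ] Γ) :=
    Finite.of_equiv (H × Γ) ⟨fun p => ⟨p.1, p.2⟩, fun w => (w.left, w.right),
      fun _ => rfl, fun _ => rfl⟩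
  haveI finTw : Finite (Tw ρ σ) :=
    Finite.of_equiv (A × (H ⋊[φ] Γ)) ⟨fun p => ⟨p.1, p.2⟩, fun w => (w.a, w.x),
      fun _ => rfl, fun _ => rfl⟩
  -- the quotient map and the inclusion of A
  let qE : Tw ρ σ →* (H ⋊[φ] Γ) :=
    { toFun := fun w => w.x, map_one' := rfl, map_mul' := fun _ _ => rfl }
  let u : A := (σ 1 1)⁻¹
  let ι : A →* Tw ρ σ :=
    { toFun := fun a => ⟨a * u, 1⟩
      map_one' := by
        refine Tw.ext' ?_ rfl
        show (1 : A) * u = (σ 1 1)⁻¹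
        rw [one_mul]
      map_mul' := by
        intro a b
        refine Tw.ext' ?_ ?_
        · show a * b * u = (a * u) * ρ 1 (b * u) * σ 1 1
          rw [map_one]
          simp only [MulAut.one_apply]
          have hu : u * σ 1 1 = 1 := inv_mul_cancel _
          calc a * b * u = a * (b * (u * (u * σ 1 1))) := by rw [hu, mul_one, ← mul_assoc]
            _ = a * u * (b * u) * σ 1 1 := by
                simp only [mul_assoc]
                rw [mul_left_comm b u]
        · show (1 : H ⋊[φ] Γ) = 1 * 1
          rw [one_mul] }
  have hι_inj : Function.Injective ι := by
    intro a b h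
    have := congrArg Tw.a h
    exact mul_right_cancel this
  have hqι : ∀ a, qE (ι a) = 1 := fun a => rfl
  have hconj : ∀ (w : Tw ρ σ) (a : A), w * ι a = ι (ρ (qE w) a) * w := by
    intro w a
    refine Tw.ext' ?_ ?_
    · show w.a * ρ w.x (a * u) * σ w.x 1 = (ρ w.x a * u) * ρ 1 w.a * σ 1 w.x
      rw [map_one, Tw.sigma_one_right hσ w.x, Tw.sigma_one_left hσ w.x]
      simp only [MulAut.one_apply, map_mul]
      show w.a * (ρ w.x a * ρ w.x u) * ρ w.x (σ 1 1) = ρ w.x a * u * w.a * σ 1 1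
      have h1 : ρ w.x u * ρ w.x (σ 1 1) = 1 := by
        rw [← map_mul, inv_mul_cancel, map_one]
      have h2 : u * σ 1 1 = 1 := inv_mul_cancel _
      trans (ρ w.x a * w.a)
      · calc w.a * (ρ w.x a * ρ w.x u) * ρ w.x (σ 1 1)
            = (w.a * ρ w.x a) * (ρ w.x u * ρ w.x (σ 1 1)) := by
              simp only [mul_assoc]
          _ = w.a * ρ w.x a := by rw [h1, mul_one]
          _ = ρ w.x a * w.a := mul_comm _ _
      · calc ρ w.x a * w.a = ρ w.x a * (w.a * (u * σ 1 1)) := by rw [h2, mul_one]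
          _ = ρ w.x a * (u * (w.a * σ 1 1)) := by rw [mul_left_comm w.a u]
          _ = ρ w.x a * u * w.a * σ 1 1 := by simp only [mul_assoc]
    · show w.x * 1 = 1 * w.x
      rw [mul_one, one_mul]
  -- the canonical set-theoretic section of qE
  let eτ : (H ⋊[φ] Γ) → Tw ρ σ := fun x => ⟨1, x⟩
  have hqeτ : ∀ x, qE (eτ x) = x := fun x => rfl
  have heτ : ∀ x y, eτ x * eτ y = ι (σ x y) * eτ (x * y) := by
    intro x y
    refine Tw.ext' ?_ ?_
    · show (1 : A) * ρ x 1 * σ x y = (σ x y * u) * ρ 1 1 * σ 1 (x * y)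
      rw [map_one, map_one, Tw.sigma_one_right hσ (x * y)]
      simp only [MulAut.one_apply, one_mul, mul_one]
      have h2 : u * σ 1 1 = 1 := inv_mul_cancel _
      rw [mul_assoc, h2, mul_one]
    · show x * y = 1 * (x * y)
      rw [one_mul]
  have hkerι : ∀ w : Tw ρ σ, qE w = 1 → ∃ a, w = ι a := by
    intro w hw
    refine ⟨w.a * σ 1 1, Tw.ext' ?_ ?_⟩
    · show w.a = w.a * σ 1 1 * u
      rw [mul_assoc, mul_inv_cancel, mul_one]
    · exact hw
  -- Schur–Zassenhaus: a complement of A inside the preimage of inr Γ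
  let S : Subgroup (Tw ρ σ) := ((inr : Γ →* H ⋊[φ] Γ).range).comap qE
  let θ : ↥S →* Γ := (SemidirectProduct.rightHom.comp qE).domRestrict S
  have hθsurj : Function.Surjective θ := by
    intro γ
    refine ⟨⟨⟨1, inr γ⟩, ⟨γ, rfl⟩⟩, ?_⟩
    show SemidirectProduct.rightHom (inr γ : H ⋊[φ] Γ) = γ
    exact rightHom_inr γ
  have hNcard : Nat.card θ.ker = Nat.card A := by
    refine (Nat.card_congr (Equiv.symm ⟨?_, ?_, ?_, ?_⟩))
    · exact fun a => ⟨⟨ι a, ⟨1, by rw [map_one]; exact (hqι a).symm⟩⟩,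
        show SemidirectProduct.rightHom (qE (ι a)) = 1 by rw [hqι a, map_one]⟩
    · exact fun n => (n.1.1.a) * σ 1 1
    · intro a
      show (ι a).a * σ 1 1 = a
      show a * u * σ 1 1 = a
      rw [mul_assoc, inv_mul_cancel, mul_one]
    · intro n
      have hmem : qE n.1.1 ∈ (inr : Γ →* H ⋊[φ] Γ).range := n.1.2
      obtain ⟨γ, hγ⟩ := hmem
      have hrh : SemidirectProduct.rightHom (qE n.1.1) = 1 := n.2
      have hγ1 : γ = 1 := by rw [← hγ, rightHom_inr] at hrh; exact hrh
      have hx1 : qE n.1.1 = 1 := by rw [← hγ, hγ1, map_one]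
      have : ι ((n.1.1.a) * σ 1 1) = n.1.1 := by
        refine Tw.ext' ?_ ?_
        · show n.1.1.a * σ 1 1 * u = n.1.1.a
          rw [mul_assoc, mul_inv_cancel, mul_one]
        · exact hx1.symm
      exact Subtype.ext (Subtype.ext this)
  have hNindex : θ.ker.index = Nat.card Γ := by
    rw [Subgroup.index_ker, MonoidHom.range_eq_top.mpr hθsurj, Subgroup.card_top]
  have hcop : Nat.Coprime (Nat.card θ.ker) θ.ker.index := by
    rw [hNcard, hNindex]
    exact h2.symm
  obtain ⟨K, hK⟩ := Subgroup.exists_right_complement'_of_coprime hcop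
  -- the splitting k : Γ → Tw over inr
  let θK : ↥K →* Γ := θ.comp K.subtype
  have hθKinj : Function.Injective θK := by
    intro x y hxy
    have hmem : (x * y⁻¹ : ↥S) ∈ θ.ker := by
      show θ (x.1 * (y.1)⁻¹) = 1
      rw [map_mul, map_inv]
      show θK x * (θK y)⁻¹ = 1
      rw [hxy, mul_inv_cancel]
    have hmemK : (x : ↥S) * (y : ↥S)⁻¹ ∈ K := K.mul_mem x.2 (K.inv_mem y.2)
    have := Subgroup.disjoint_def.mp hK.disjoint hmem hmemK
    have hxe : (x : ↥S) = y := by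
      have h1 : (x : ↥S) * (y : ↥S)⁻¹ = 1 := this
      calc (x : ↥S) = (x : ↥S) * (y : ↥S)⁻¹ * y := by group
        _ = 1 * y := by rw [h1]
        _ = y := one_mul _
    exact Subtype.ext hxe
  have hKcard : Nat.card ↥K = Nat.card Γ := by
    have hmul : Nat.card θ.ker * Nat.card ↥K = Nat.card ↥S := hK.card_mul
    have hmul2 : Nat.card θ.ker * θ.ker.index = Nat.card ↥S := θ.ker.card_mul_index
    have hpos : 0 < Nat.card θ.ker := Nat.card_pos
    have := hmul.trans hmul2.symm
    rw [hNindex] at this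
    exact Nat.eq_of_mul_eq_mul_left hpos this
  have hθKsurj : Function.Surjective θK := by
    have hrange : Nat.card θK.range = Nat.card Γ := by
      rw [← hKcard]
      exact (Nat.card_congr (Equiv.ofInjective _ hθKinj)).symm
    have : θK.range = ⊤ := Subgroup.eq_top_of_card_eq _ hrange
    exact MonoidHom.range_eq_top.mp this
  let θKequiv : ↥K ≃* Γ := MulEquiv.ofBijective θK ⟨hθKinj, hθKsurj⟩
  let k : Γ →* Tw ρ σ := (S.subtype.comp K.subtype).comp θKequiv.symm.toMonoidHom
  have hθk : ∀ γ, SemidirectProduct.rightHom (qE (k γ)) = γ := by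
    intro γ
    show θ (K.subtype (θKequiv.symm γ)) = γ
    show θK (θKequiv.symm γ) = γ
    exact θKequiv.apply_symm_apply γ
  have hqk : ∀ γ, qE (k γ) = inr γ := by
    intro γ
    have hmem : qE (k γ) ∈ (inr : Γ →* H ⋊[φ] Γ).range := (K.subtype (θKequiv.symm γ)).2
    obtain ⟨δ, hδ⟩ := hmem
    have : δ = γ := by rw [← hθk γ, ← hδ, rightHom_inr]
    rw [← hδ, this]
  -- the Γ-group G := kernel of Tw → Γ
  let π : Tw ρ σ →* Γ := SemidirectProduct.rightHom.comp qE
  let N₀ : Subgroup (Tw ρ σ) := π.ker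
  haveI : N₀.Normal := MonoidHom.normal_ker π
  let act : Γ →* MulAut ↥N₀ := MulAut.conjNormal.comp k
  have hact : ∀ (γ : Γ) (n : ↥N₀), ((act γ n : ↥N₀) : Tw ρ σ) = k γ * n * (k γ)⁻¹ :=
    fun γ n => rfl
  have hιmem : ∀ a : A, ι a ∈ N₀ := by
    intro a
    show SemidirectProduct.rightHom (qE (ι a)) = 1
    rw [hqι a, map_one]
  let iG : A →* ↥N₀ := ι.codRestrict N₀ hιmem
  have hqEinl : ∀ n : ↥N₀, qE (n : Tw ρ σ) = inl ((qE (n : Tw ρ σ)).left) := by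
    intro n
    have hr : (qE (n : Tw ρ σ)).right = 1 := n.2
    ext
    · rw [left_inl]
    · rw [right_inl, hr]
  let pG : ↥N₀ →* H :=
    { toFun := fun n => (qE (n : Tw ρ σ)).left
      map_one' := by
        show (qE (1 : Tw ρ σ)).left = 1
        rw [map_one]
        rfl
      map_mul' := by
        intro m n
        show (qE ((m : Tw ρ σ) * n)).left = _
        rw [map_mul]
        rw [mul_left]
        have hr : (qE (m : Tw ρ σ)).right = 1 := m.2
        rw [hr, map_one]
        rfl }
  have hqEinl' : ∀ n : ↥N₀, qE (n : Tw ρ σ) = inl (pG n) := hqEinl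
  -- assemble the Γ-extension
  let E : GammaExtension Γ H φ A ρ :=
    { G := ↥N₀
      act := act
      i := iG
      p := pG
      i_inj := by
        intro a b hab
        exact hι_inj (congrArg Subtype.val hab)
      p_surj := by
        intro h
        refine ⟨⟨⟨1, inl h⟩, ?_⟩, ?_⟩
        · show SemidirectProduct.rightHom (inl h : H ⋊[φ] Γ) = 1
          rw [rightHom_inl]
        · show (qE (⟨1, inl h⟩ : Tw ρ σ)).left = h
          rfl
      range_eq_ker := by
        ext n
        constructor
        · rintro ⟨a, rfl⟩
          show (qE (ι a)).left = 1
          rw [hqι a]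
          rfl
        · intro hn
          have h1 : pG n = 1 := hn
          have h2 : qE (n : Tw ρ σ) = 1 := by
            rw [hqEinl' n, h1, map_one]
          obtain ⟨a, ha⟩ := hkerι _ h2
          exact ⟨a, Subtype.ext ha.symm⟩
      p_equivariant := by
        intro γ n
        show (qE ((act γ n : ↥N₀) : Tw ρ σ)).left = φ γ (pG n)
        rw [hact, map_mul, map_mul, map_inv, hqk, hqEinl' n]
        rw [← map_inv inr γ, ← inl_aut γ (pG n), left_inl]
      conj_i := by
        intro g a
        refine Subtype.ext ?_
        show (g : Tw ρ σ) * ι a * (g : Tw ρ σ)⁻¹ = ι (ρ (inl (pG g)) a)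
        rw [hconj, hqEinl' g]
        group
      act_i := by
        intro γ a
        refine Subtype.ext ?_
        show k γ * ι a * (k γ)⁻¹ = ι (ρ (inr γ) a)
        rw [hconj, hqk]
        group }
  -- the realization
  have hnmem : ∀ x : H ⋊[φ] Γ, eτ x * (k x.right)⁻¹ ∈ N₀ := by
    intro x
    show SemidirectProduct.rightHom (qE (eτ x * (k x.right)⁻¹)) = 1
    rw [map_mul, map_inv, hqk, hqeτ, map_mul, map_inv, rightHom_inr]
    show x.right * x.right⁻¹ = 1
    rw [mul_inv_cancel]
  let nf : (H ⋊[φ] Γ) → ↥N₀ := fun x => ⟨eτ x * (k x.right)⁻¹, hnmem x⟩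
  have hpnf : ∀ x, pG (nf x) = x.left := by
    intro x
    show (qE (eτ x * (k x.right)⁻¹)).left = x.left
    rw [map_mul, map_inv, hqk, hqeτ]
    rw [mul_left]
    show x.left * φ x.right (((inr x.right)⁻¹ : H ⋊[φ] Γ).left) = x.left
    rw [← map_inv inr, left_inr, map_one, mul_one]
  refine ⟨E, ⟨fun x => ⟨nf x, x.right⟩, ?_, ?_⟩⟩
  · intro x
    show (⟨pG (nf x), x.right⟩ : H ⋊[φ] Γ) = x
    rw [hpnf]
  · intro x y
    have hrr : (⟨nf x, x.right⟩ * ⟨nf y, y.right⟩ : ↥N₀ ⋊[act] Γ)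
        = ⟨nf x * act x.right (nf y), x.right * y.right⟩ := rfl
    have hlr : (inl (iG (σ x y)) * ⟨nf (x * y), (x * y).right⟩ : ↥N₀ ⋊[act] Γ)
        = ⟨iG (σ x y) * nf (x * y), (x * y).right⟩ := by
      ext
      · rw [mul_left, left_inl, right_inl, map_one]
        rfl
      · rw [mul_right, right_inl, one_mul]
    show (⟨nf x, x.right⟩ * ⟨nf y, y.right⟩ : ↥N₀ ⋊[act] Γ) = _
    rw [hrr, hlr]
    congr 1
    · refine Subtype.ext ?_
      show (eτ x * (k x.right)⁻¹) * (k x.right * (eτ y * (k y.right)⁻¹) * (k x.right)⁻¹)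
          = ι (σ x y) * (eτ (x * y) * (k ((x * y).right))⁻¹)
      have hk2 : k ((x * y).right) = k x.right * k y.right := by
        rw [mul_right, map_mul]
      rw [hk2]
      calc (eτ x * (k x.right)⁻¹) * (k x.right * (eτ y * (k y.right)⁻¹) * (k x.right)⁻¹)
          = (eτ x * eτ y) * ((k x.right * k y.right)⁻¹) := by group
        _ = (ι (σ x y) * eτ (x * y)) * ((k x.right * k y.right)⁻¹) := by rw [heτ]
        _ = ι (σ x y) * (eτ (x * y) * (k x.right * k y.right)⁻¹) := by
            simp only [mul_assoc]

lemma realizes_of_coboundary (E' : GammaExtension Γ H φ A ρ)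
    (σ σ' : (H ⋊[φ] Γ) → (H ⋊[φ] Γ) → A) (t : (H ⋊[φ] Γ) → A)
    (ht : ∀ x y, σ x y * (σ' x y)⁻¹ = t x * ρ x (t y) * (t (x * y))⁻¹)
    {s' : (H ⋊[φ] Γ) → (E'.G ⋊[E'.act] Γ)} (hs' : ∀ x, qmap E' (s' x) = x)
    (hσ' : ∀ x y, s' x * s' y = inl (E'.i (σ' x y)) * s' (x * y)) :
    ∃ s'' : (H ⋊[φ] Γ) → (E'.G ⋊[E'.act] Γ),
      (∀ x, qmap E' (s'' x) = x) ∧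
      ∀ x y, s'' x * s'' y = inl (E'.i (σ x y)) * s'' (x * y) := by
  refine ⟨fun x => inl (E'.i (t x)) * s' x, fun x => by simp [map_mul, qmap_inl_i, hs'], ?_⟩
  intro x y
  have hA : t x * ρ x (t y) * σ' x y = σ x y * t (x * y) := by
    have h1 : σ x y = t x * ρ x (t y) * (t (x * y))⁻¹ * σ' x y := by
      have := ht x y
      calc σ x y = σ x y * (σ' x y)⁻¹ * σ' x y := by group
        _ = t x * ρ x (t y) * (t (x * y))⁻¹ * σ' x y := by rw [this]
    rw [h1]
    calc t x * ρ x (t y) * σ' x y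
        = t x * ρ x (t y) * σ' x y * ((t (x * y))⁻¹ * t (x * y)) := by
          rw [inv_mul_cancel, mul_one]
      _ = t x * ρ x (t y) * (t (x * y))⁻¹ * σ' x y * t (x * y) := by
          simp only [mul_assoc]
          rw [mul_left_comm (σ' x y) ((t (x * y))⁻¹)]
  calc (inl (E'.i (t x)) * s' x) * (inl (E'.i (t y)) * s' y)
      = inl (E'.i (t x)) * ((s' x * inl (E'.i (t y))) * s' y) := by
        simp only [mul_assoc]
    _ = inl (E'.i (t x)) * ((inl (E'.i (ρ x (t y))) * s' x) * s' y) := by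
        rw [conj_formula, hs']
    _ = inl (E'.i (t x)) * inl (E'.i (ρ x (t y))) * (s' x * s' y) := by
        simp only [mul_assoc]
    _ = inl (E'.i (t x)) * inl (E'.i (ρ x (t y))) * (inl (E'.i (σ' x y)) * s' (x * y)) := by
        rw [hσ']
    _ = inl (E'.i (t x * ρ x (t y) * σ' x y)) * s' (x * y) := by
        simp only [map_mul, mul_assoc]
    _ = inl (E'.i (σ x y * t (x * y))) * s' (x * y) := by rw [hA]
    _ = inl (E'.i (σ x y)) * (inl (E'.i (t (x * y))) * s' (x * y)) := by
        simp only [map_mul, mul_assoc]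

end Stmt8


open Stmt8 in
/-- For `Γ` finite acting on finite `H`, and finite abelian `A` with `H ⋊ Γ`-action `ρ`,
with `|Γ|` coprime to `|H|` and `|A|`: isomorphism classes of extensions of `Γ`-groups
`1 → A → G → H → 1` inducing `ρ` are in bijection with `H²(H ⋊ Γ, A)`, the bijection
sending `A → G → H` to (the class of) the group extension `A → G ⋊ Γ → H ⋊ Γ`:
every `Γ`-extension realizes a 2-cocycle of `H ⋊ Γ`; two `Γ`-extensions are isomorphic
iff their realized cocycles are cohomologous; and every 2-cocycle is realized. -/
theorem stmt_8 (Γ H A : Type u) [Group Γ] [Finite Γ] [Group H] [Finite H]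
    [CommGroup A] [Finite A] (φ : Γ →* MulAut H) (ρ : (H ⋊[φ] Γ) →* MulAut A)
    (h1 : Nat.Coprime (Nat.card Γ) (Nat.card H))
    (h2 : Nat.Coprime (Nat.card Γ) (Nat.card A)) :
    (∀ E : GammaExtension Γ H φ A ρ,
      ∃ σ : (H ⋊[φ] Γ) → (H ⋊[φ] Γ) → A, IsTwoCocycle ρ σ ∧ Realizes E σ) ∧
    (∀ (E E' : GammaExtension Γ H φ A ρ)
        (σ σ' : (H ⋊[φ] Γ) → (H ⋊[φ] Γ) → A),
      IsTwoCocycle ρ σ → IsTwoCocycle ρ σ' → Realizes E σ → Realizes E' σ' →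
      (Nonempty (ExtIso E E') ↔
        IsTwoCoboundary ρ fun x y => σ x y * (σ' x y)⁻¹)) ∧
    (∀ σ : (H ⋊[φ] Γ) → (H ⋊[φ] Γ) → A,
      IsTwoCocycle ρ σ → ∃ E : GammaExtension Γ H φ A ρ, Realizes E σ) := by
  refine ⟨fun E => part1 E, ?_, fun σ hσ => part3 h2 σ hσ⟩
  intro E E' σ σ' hσ hσ' hr hr'
  obtain ⟨s, hs, hsσ⟩ := hr
  obtain ⟨s', hs', hsσ'⟩ := hr'
  constructor
  · rintro ⟨iso⟩
    exact part2_forward E E' σ σ' hs hsσ hs' hsσ' iso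
  · rintro ⟨t, ht⟩
    obtain ⟨s'', hs'', hsσ''⟩ := realizes_of_coboundary E' σ σ' t (fun x y => ht x y) hs' hsσ'
    exact part2_backward h2 E E' σ hs hsσ hs'' hsσ''
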